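/- In a maximal tail M of a directed graph, any two cycles contained in M that have no exit in M are cyclic permutations of each other; equivalently, there is at most one cycle without exit in M up to cyclic permutation. -/

import Mathlib

section Graph

variable {V E : Type*} (s r : E → V)

/-- `v ≥ w`: either `v = w` or there is a directed path from `v` to `w`. -/
def Reach (v w : V) : Prop :=
  Relation.ReflTransGen (fun a b => ∃ e, s e = a ∧ r e = b) v w

/-- A nonempty `M ⊆ V` is a maximal tail: (1) it is upward closed under `≥`;
(2) every non-sink vertex of `M` emits an edge into `M`; (3) `M` is downward directed. -/
def MaximalTail (M : Set V) : Prop :=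
  M.Nonempty ∧
  (∀ v w, Reach s r v w → w ∈ M → v ∈ M) ∧
  (∀ v ∈ M, (∃ e, s e = v) → ∃ e, s e = v ∧ r e ∈ M) ∧
  (∀ v ∈ M, ∀ w ∈ M, ∃ y ∈ M, Reach s r v y ∧ Reach s r w y)

/-- `c` is a cycle: a nonempty list of consecutive edges returning to its starting
vertex, with pairwise distinct sources. -/
def IsCycle (c : List E) : Prop :=
  c ≠ [] ∧ c.Chain' (fun a b => r a = s b) ∧
  (∀ h : c ≠ [], r (c.getLast h) = s (c.head h)) ∧ (c.map s).Nodup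

/-- The cycle `c` is contained in `M`: all its vertices lie in `M`. -/
def CycleIn (c : List E) (M : Set V) : Prop :=
  ∀ e ∈ c, s e ∈ M ∧ r e ∈ M

/-- The cycle `c` has no exit in `M`: no vertex of `c` emits an edge, other than the
corresponding cycle edge, whose range lies in `M`. -/
def NoExitIn (c : List E) (M : Set V) : Prop :=
  ∀ e ∈ c, ∀ f, s f = s e → r f ∈ M → f = e

end Graph

section Aux
variable {V E : Type*} {s r : E → V}

lemma aux_isCycle_rotate_one {x : E} {l : List E}
    (h : IsCycle s r (x :: l)) : IsCycle s r (l ++ [x]) := by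
  obtain ⟨-, hch, hlast, hnd⟩ := h
  have hl := hlast (by simp)
  refine ⟨by simp, ?_, ?_, ?_⟩
  · refine List.isChain_append.mpr ?_
    refine ⟨hch.tail, List.isChain_singleton _, ?_⟩
    intro a ha b hb
    simp only [List.head?_cons, Option.mem_def, Option.some.injEq] at hb
    subst hb
    cases l with
    | nil => simp at ha
    | cons y t =>
      rw [List.getLast?_eq_getLast_of_ne_nil (by simp), Option.mem_def,
        Option.some_inj] at ha
      subst ha
      rw [List.getLast_cons (by simp)] at hl
      simpa using hl
  · intro hne
    cases l with
    | nil => simpa using hl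
    | cons y t =>
      have h1 : r x = s y := (List.isChain_cons_cons.mp hch).1
      rw [List.getLast_append_of_ne_nil _ (by simp)]
      simpa using h1
  · refine (List.Perm.nodup_iff ?_).mp hnd
    simp only [List.map_append, List.map_cons, List.map_nil]
    exact (List.perm_append_singleton _ _).symm

lemma aux_isCycle_rotate {c : List E} (h : IsCycle s r c) (n : ℕ) :
    IsCycle s r (c.rotate n) := by
  induction n generalizing c with
  | zero => simpa using h
  | succ n ih =>
    cases c with
    | nil => exact absurd rfl h.1
    | cons x l =>
      rw [List.rotate_cons_succ]
      exact ih (aux_isCycle_rotate_one h)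

lemma aux_r_mem_sources {d : List E} (hc : IsCycle s r d) {e : E} (he : e ∈ d) :
    r e ∈ d.map s := by
  obtain ⟨hne, hch, hlast, -⟩ := hc
  obtain ⟨i, hi, rfl⟩ := List.getElem_of_mem he
  rcases eq_or_lt_of_le (Nat.succ_le_of_lt hi) with h1 | h1
  · have h2 : d[i] = d.getLast hne := by
      rw [List.getLast_eq_getElem]
      congr 1
      omega
    rw [h2, hlast hne, List.head_eq_getElem]
    exact List.mem_map_of_mem (f := s) (List.getElem_mem _)
  · have h3 := List.isChain_iff_getElem.mp hch i (by omega)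
    rw [h3]
    exact List.mem_map_of_mem (f := s) (List.getElem_mem _)

end Aux

section Aux2
variable {V E : Type*} {s r : E → V}

lemma aux_reach_mem {M : Set V} (hup : ∀ v w, Reach s r v w → w ∈ M → v ∈ M)
    {d : List E} (hc : IsCycle s r d) (hex : NoExitIn s r d M)
    {v y : V} (hy : y ∈ M) (hr : Reach s r v y) (hv : v ∈ d.map s) :
    y ∈ d.map s := by
  revert hv
  induction hr using Relation.ReflTransGen.head_induction_on with
  | refl => exact fun hv => hv
  | head h' hrest ih =>
    intro hv
    obtain ⟨f, hfa, hfc⟩ := h'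
    obtain ⟨e, he, hse⟩ := List.mem_map.mp hv
    have hfM : r f ∈ M := by
      rw [hfc]
      exact hup _ _ hrest hy
    have hfe : f = e := hex e he f (hfa.trans hse.symm) hfM
    refine ih ?_
    rw [← hfc, hfe]
    exact aux_r_mem_sources hc he

lemma aux_len_le {d₁ d₂ : List E} (h₁ : IsCycle s r d₁) (h₂ : IsCycle s r d₂)
    (hh : s (d₁.head h₁.1) = s (d₂.head h₂.1))
    (key : ∀ k (hk1 : k < d₁.length) (hk2 : k < d₂.length),
      d₁[k] = d₂[k]) : d₂.length ≤ d₁.length := by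
  obtain ⟨hne₁, hch₁, hlast₁, hnd₁⟩ := h₁
  obtain ⟨hne₂, hch₂, hlast₂, hnd₂⟩ := h₂
  by_contra hlt
  push_neg at hlt
  set n := d₁.length with hn
  have hn0 : 0 < n := List.length_pos_iff.mpr hne₁
  have e1 : r (d₁.getLast hne₁) = s (d₁.head hne₁) := hlast₁ hne₁
  have e2 : d₁.getLast hne₁ = d₁[n - 1]'(by omega) := List.getLast_eq_getElem _
  have e3 : r (d₂[n - 1]'(by omega)) = s (d₂[n]'(by omega)) := by
    have h4 := List.isChain_iff_getElem.mp hch₂ (n - 1) (by omega)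
    simpa [List.get_eq_getElem, Nat.sub_add_cancel hn0] using h4
  have e4 : s (d₂[n]'(by omega)) = s (d₂[0]'(by omega)) := by
    rw [← e3, ← key (n - 1) (by omega) (by omega), ← e2, e1, hh,
      List.head_eq_getElem]
  have e5 : (⟨n, by rw [List.length_map]; omega⟩ : Fin (d₂.map s).length) =
      ⟨0, by rw [List.length_map]; omega⟩ :=
    hnd₂.get_inj_iff.mp
      (by simp only [List.get_eq_getElem, List.getElem_map]; exact e4)
  have : n = 0 := by simpa using e5
  omega

lemma aux_eq_of_head_eq {M : Set V} {d₁ d₂ : List E}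
    (h₁ : IsCycle s r d₁) (h₁M : CycleIn s r d₁ M) (h₁ex : NoExitIn s r d₁ M)
    (h₂ : IsCycle s r d₂) (h₂M : CycleIn s r d₂ M) (h₂ex : NoExitIn s r d₂ M)
    (hh : s (d₁.head h₁.1) = s (d₂.head h₂.1)) : d₁ = d₂ := by
  have key : ∀ k (hk1 : k < d₁.length) (hk2 : k < d₂.length),
      d₁[k] = d₂[k] := by
    intro k
    induction k with
    | zero =>
      intro hk1 hk2
      have hs : s (d₂[0]'hk2) = s (d₁[0]'hk1) := by
        rw [← List.head_eq_getElem, ← List.head_eq_getElem]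
        exact hh.symm
      exact (h₁ex _ (List.getElem_mem _) _ hs (h₂M _ (List.getElem_mem _)).2).symm
    | succ k ih =>
      intro hk1 hk2
      have he := ih (by omega) (by omega)
      have hs : s (d₂[k + 1]'hk2) = s (d₁[k + 1]'hk1) := by
        have t1 := List.isChain_iff_getElem.mp h₁.2.1 k (by omega)
        have t2 := List.isChain_iff_getElem.mp h₂.2.1 k (by omega)
        rw [← t1, ← t2, he]
      exact (h₁ex _ (List.getElem_mem _) _ hs (h₂M _ (List.getElem_mem _)).2).symm
  have hle1 : d₂.length ≤ d₁.length := aux_len_le h₁ h₂ hh key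
  have hle2 : d₁.length ≤ d₂.length :=
    aux_len_le h₂ h₁ hh.symm (fun k hk1 hk2 => (key k hk2 hk1).symm)
  apply List.ext_get (le_antisymm hle2 hle1)
  intro i hi1 hi2
  simpa only [List.get_eq_getElem] using key i hi1 hi2

end Aux2


/-- In a maximal tail `M` of a directed graph, any two cycles contained in `M` having
no exit in `M` are cyclic permutations (rotations) of each other. -/
theorem cycles_without_exit_in_maximalTail_unique {V E : Type*} (s r : E → V)
    (M : Set V) (hM : MaximalTail s r M) (c₁ c₂ : List E)
    (hc₁ : IsCycle s r c₁) (hc₁M : CycleIn s r c₁ M) (hc₁ex : NoExitIn s r c₁ M)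
    (hc₂ : IsCycle s r c₂) (hc₂M : CycleIn s r c₂ M) (hc₂ex : NoExitIn s r c₂ M) :
    c₁.IsRotated c₂ := by
  obtain ⟨-, hup, -, hdir⟩ := hM
  have hne₁ := hc₁.1
  have hne₂ := hc₂.1
  have hv₁ : s (c₁.head hne₁) ∈ M := (hc₁M _ (List.head_mem hne₁)).1
  have hv₂ : s (c₂.head hne₂) ∈ M := (hc₂M _ (List.head_mem hne₂)).1
  obtain ⟨y, hyM, hr₁, hr₂⟩ := hdir _ hv₁ _ hv₂
  have hy₁ : y ∈ c₁.map s :=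
    aux_reach_mem hup hc₁ hc₁ex hyM hr₁ (List.mem_map_of_mem (f := s) (List.head_mem hne₁))
  have hy₂ : y ∈ c₂.map s :=
    aux_reach_mem hup hc₂ hc₂ex hyM hr₂ (List.mem_map_of_mem (f := s) (List.head_mem hne₂))
  obtain ⟨i, hi, hsi⟩ : ∃ i, ∃ h : i < c₁.length, s (c₁[i]'h) = y := by
    obtain ⟨e, he, hse⟩ := List.mem_map.mp hy₁
    obtain ⟨i, hi, rfl⟩ := List.getElem_of_mem he
    exact ⟨i, hi, hse⟩
  obtain ⟨j, hj, hsj⟩ : ∃ j, ∃ h : j < c₂.length, s (c₂[j]'h) = y := by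
    obtain ⟨e, he, hse⟩ := List.mem_map.mp hy₂
    obtain ⟨j, hj, rfl⟩ := List.getElem_of_mem he
    exact ⟨j, hj, hse⟩
  have hd₁ : IsCycle s r (c₁.rotate i) := aux_isCycle_rotate hc₁ i
  have hd₂ : IsCycle s r (c₂.rotate j) := aux_isCycle_rotate hc₂ j
  have hhead1 : s ((c₁.rotate i).head hd₁.1) = y := by
    rw [List.head_eq_getElem, List.getElem_rotate]
    simpa only [Nat.zero_add, Nat.mod_eq_of_lt hi] using hsi
  have hhead2 : s ((c₂.rotate j).head hd₂.1) = y := by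
    rw [List.head_eq_getElem, List.getElem_rotate]
    simpa only [Nat.zero_add, Nat.mod_eq_of_lt hj] using hsj
  have heq : c₁.rotate i = c₂.rotate j :=
    aux_eq_of_head_eq hd₁
      (fun e he => hc₁M e (List.mem_rotate.mp he))
      (fun e he => hc₁ex e (List.mem_rotate.mp he))
      hd₂
      (fun e he => hc₂M e (List.mem_rotate.mp he))
      (fun e he => hc₂ex e (List.mem_rotate.mp he))
      (hhead1.trans hhead2.symm)
  have h1 : c₁.IsRotated (c₂.rotate j) := ⟨i, heq⟩
  have h2 : c₂.IsRotated (c₂.rotate j) := ⟨j, rfl⟩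
  exact h1.trans h2.symm
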